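/- If the finite system S_q is detectable, then for every input sequence α of length at least the transient period T_t of its knowledge-NFA A, and every output sequence β of length |α|+1, the set of states of S_q consistent with (α, β) has cardinality at most 1. -/

import Mathlib

structure Sys (X U Y : Type) where
  init : Set X
  tr : X → U → X → Prop
  H : X → Y

namespace Sys

variable {X U Y : Type}

/-- the set of `u`-successors of `x` -/
def Post (S : Sys X U Y) (x : X) (u : U) : Set X := {x' | S.tr x u x'}

/-- inputs admissible at state `x` -/
def adm (S : Sys X U Y) (x : X) : Set U := {u | (S.Post x u).Nonempty}

/-- inputs admissible at output `y` (admissible at every state with that output) -/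
def admOut (S : Sys X U Y) (y : Y) : Set U := {u | ∀ x, S.H x = y → u ∈ S.adm x}

/-- `u`-successor observations of output `y` -/
def obsPost (S : Sys X U Y) (y : Y) (u : U) : Set Y :=
  S.H '' (⋃ x ∈ {x | S.H x = y}, S.Post x u)

end Sys

/-- Feedback refinement relation from `S₁` to `S₂`. -/
def IsFRR {X₁ X₂ U Y₁ Y₂ : Type} (S₁ : Sys X₁ U Y₁) (S₂ : Sys X₂ U Y₂)
    (Q : Set (X₁ × X₂)) : Prop :=
  (∀ x₁, ∃ x₂, (x₁, x₂) ∈ Q) ∧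
  (∀ p ∈ Q, S₂.adm p.2 ⊆ S₁.adm p.1) ∧
  (∀ p ∈ Q, ∀ u ∈ S₂.adm p.2, ∀ x₁' ∈ S₁.Post p.1 u, ∀ x₂',
      (x₁', x₂') ∈ Q → x₂' ∈ S₂.Post p.2 u) ∧
  (∀ p ∈ Q, p.1 ∈ S₁.init → p.2 ∈ S₂.init)

/-- Output-feedback refinement relation `Z` over underlying FRR `Q`. -/
def IsOFRR {X₁ X₂ U Y₁ Y₂ : Type} (S₁ : Sys X₁ U Y₁) (S₂ : Sys X₂ U Y₂)
    (Q : Set (X₁ × X₂)) (Z : Set (Y₁ × Y₂)) : Prop :=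
  IsFRR S₁ S₂ Q ∧
  (∀ p ∈ Z, S₂.admOut p.2 ⊆ S₁.admOut p.1) ∧
  (∀ p ∈ Q, (S₁.H p.1, S₂.H p.2) ∈ Z) ∧
  (∀ p ∈ Z, ∃ q ∈ Q, S₁.H q.1 = p.1 ∧ S₂.H q.2 = p.2)

/-- One observation step: successors of `s` under input `u` whose output is `y`. -/
def obsStep {X U Y : Type} (S : Sys X U Y) (s : Set X) (u : U) (y : Y) : Set X :=
  {x' | (∃ x ∈ s, S.tr x u x') ∧ S.H x' = y}

/-- `Post_α^β(X)`: states consistent with initial observation `y0` and the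
input/observation sequence `l`. -/
def ReachIO {X U Y : Type} (S : Sys X U Y) (y0 : Y) (l : List (U × Y)) : Set X :=
  l.foldl (fun s p => obsStep S s p.1 p.2) {x | S.H x = y0}

/-- Detectability: sufficiently long input/observation histories determine the
current state uniquely. -/
def Detectable {X U Y : Type} (S : Sys X U Y) : Prop :=
  ∃ N : ℕ, ∀ (y0 : Y) (l : List (U × Y)), N ≤ l.length →
    (ReachIO S y0 l).Subsingleton

/-- Transition relation of the knowledge NFA `A` from the pairwise-subset
construction (Algorithm 1): states are `⋄` (= `none`) together with nonempty
subsets of `X` of cardinality at most 2; labels are pairs `(Option U, Y)` where the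
first component `none` stands for the dummy input `φ`. -/
def Adelta {X U Y : Type} (S : Sys X U Y)
    (a : Option (Set X)) (l : Option U × Y) (b : Option (Set X)) : Prop :=
  match a, l, b with
  | none, (none, y), some z =>
      z.Nonempty ∧ (∃ c d, z = {c, d}) ∧ z ⊆ {x | S.H x = y}
  | some q, (some u, y), some z =>
      z.Nonempty ∧ (∃ c d, z = {c, d}) ∧ z ⊆ obsStep S q u y
  | _, _, _ => False

/-- One-step reachability in the NFA `A` (under some label). -/
def AR {X U Y : Type} (S : Sys X U Y) (a b : Option (Set X)) : Prop :=
  ∃ l, Adelta S a l b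

/-- Limit set of `A`: states reachable (from the initial state `⋄`) through some
cycle. -/
def LP {X U Y : Type} (S : Sys X U Y) : Set (Option (Set X)) :=
  {q | ∃ c, Relation.ReflTransGen (AR S) none c ∧
    Relation.TransGen (AR S) c c ∧ Relation.ReflTransGen (AR S) c q}

/-- The extension of `Adelta` to label sequences. -/
def AdeltaStar {X U Y : Type} (S : Sys X U Y) :
    Option (Set X) → List (Option U × Y) → Option (Set X) → Prop
  | a, [], b => a = b
  | a, l :: ls, b => ∃ c, Adelta S a l c ∧ AdeltaStar S c ls b

/-- Every pair of input sequence of length `t` and matching observation sequence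
drives `⋄` into the limit set. -/
def transientOK {X U Y : Type} (S : Sys X U Y) (t : ℕ) : Prop :=
  ∀ (y0 : Y) (l : List (U × Y)) (q : Option (Set X)), l.length = t →
    AdeltaStar S none ((none, y0) :: l.map (fun p => (some p.1, p.2))) q →
    q ∈ LP S

/-- The transient period `T_t` of the knowledge NFA of `S`. -/
noncomputable def Tt {X U Y : Type} (S : Sys X U Y) : ℕ := sInf {t | transientOK S t}

section Aux

variable {X U Y : Type}

lemma obsStep_mono (S : Sys X U Y) {s s' : Set X} (h : s ⊆ s') (u : U) (y : Y) :
    obsStep S s u y ⊆ obsStep S s' u y := by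
  rintro x ⟨⟨x0, hx0, htr⟩, hH⟩
  exact ⟨⟨x0, h hx0, htr⟩, hH⟩

lemma adeltaStar_append (S : Sys X U Y) (L1 L2 : List (Option U × Y)) (a b : Option (Set X)) :
    AdeltaStar S a (L1 ++ L2) b ↔ ∃ c, AdeltaStar S a L1 c ∧ AdeltaStar S c L2 b := by
  induction L1 generalizing a with
  | nil => simp [AdeltaStar]
  | cons l L1 ih =>
    simp only [List.cons_append, AdeltaStar]
    constructor
    · rintro ⟨c, hc, hrest⟩
      obtain ⟨d, hd1, hd2⟩ := (ih c).mp hrest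
      exact ⟨d, ⟨c, hc, hd1⟩, hd2⟩
    · rintro ⟨d, ⟨c, hc, hd1⟩, hd2⟩
      exact ⟨c, hc, (ih c).mpr ⟨d, hd1, hd2⟩⟩

lemma adeltaStar_trace (S : Sys X U Y) :
    ∀ (L : List (Option U × Y)) (a b : Option (Set X)), AdeltaStar S a L b →
    ∃ f : ℕ → Option (Set X), f 0 = a ∧ f L.length = b ∧
      ∀ i < L.length, AR S (f i) (f (i + 1)) := by
  intro L
  induction L with
  | nil =>
    intro a b h
    exact ⟨fun _ => a, rfl, h, fun i hi => absurd hi (by simp)⟩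
  | cons l L' ih =>
    intro a b h
    obtain ⟨c, hc, hrest⟩ := h
    obtain ⟨g, hg0, hgend, hgstep⟩ := ih c b hrest
    refine ⟨fun i => match i with | 0 => a | (i + 1) => g i, rfl, hgend, ?_⟩
    intro i hi
    match i with
    | 0 =>
      show AR S a (g 0)
      rw [hg0]; exact ⟨l, hc⟩
    | (j + 1) =>
      show AR S (g j) (g (j + 1))
      exact hgstep j (by simpa using hi)

lemma rtg_of_trace (S : Sys X U Y) (f : ℕ → Option (Set X)) (n : ℕ)
    (hf : ∀ i < n, AR S (f i) (f (i + 1))) :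
    ∀ i j, i ≤ j → j ≤ n → Relation.ReflTransGen (AR S) (f i) (f j) := by
  intro i j hij hjn
  induction j with
  | zero => have : i = 0 := by omega
            subst this; exact .refl
  | succ j ihj =>
    rcases Nat.lt_or_ge i (j + 1) with h | h
    · exact (ihj (by omega) (by omega)).tail (hf j (by omega))
    · have : i = j + 1 := by omega
      subst this; exact .refl

lemma tg_of_trace (S : Sys X U Y) (f : ℕ → Option (Set X)) (n : ℕ)
    (hf : ∀ i < n, AR S (f i) (f (i + 1))) :
    ∀ i j, i < j → j ≤ n → Relation.TransGen (AR S) (f i) (f j) := by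
  intro i j hij hjn
  match j with
  | (j + 1) =>
    exact Relation.TransGen.tail' (rtg_of_trace S f n hf i j (by omega) (by omega))
      (hf j (by omega))

lemma rtg_of_run (S : Sys X U Y) :
    ∀ (L : List (Option U × Y)) (a b : Option (Set X)), AdeltaStar S a L b →
      Relation.ReflTransGen (AR S) a b := by
  intro L
  induction L with
  | nil => intro a b h; rw [show a = b from h]
  | cons l L' ih =>
    intro a b h
    obtain ⟨c, hc, hrest⟩ := h
    exact Relation.ReflTransGen.head ⟨l, hc⟩ (ih c b hrest)

lemma run_of_rtg (S : Sys X U Y) {a b : Option (Set X)}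
    (h : Relation.ReflTransGen (AR S) a b) : ∃ L, AdeltaStar S a L b := by
  induction h with
  | refl => exact ⟨[], rfl⟩
  | tail _ h2 ih =>
    obtain ⟨L, hL⟩ := ih
    obtain ⟨l, hl⟩ := h2
    exact ⟨L ++ [l], (adeltaStar_append S L [l] _ _).mpr ⟨_, hL, _, hl, rfl⟩⟩

lemma run_of_tg (S : Sys X U Y) {a b : Option (Set X)}
    (h : Relation.TransGen (AR S) a b) : ∃ L, 1 ≤ L.length ∧ AdeltaStar S a L b := by
  induction h with
  | single h => obtain ⟨l, hl⟩ := h; exact ⟨[l], by simp, _, hl, rfl⟩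
  | tail _ h2 ih =>
    obtain ⟨L, hL, hrun⟩ := ih
    obtain ⟨l, hl⟩ := h2
    exact ⟨L ++ [l], by simp, (adeltaStar_append S L [l] _ _).mpr ⟨_, hrun, _, hl, rfl⟩⟩

lemma pump (S : Sys X U Y) {c : Option (Set X)} {L2 : List (Option U × Y)}
    (h2 : AdeltaStar S c L2 c) (hne : 1 ≤ L2.length) :
    ∀ m, ∃ L, m ≤ L.length ∧ AdeltaStar S c L c := by
  intro m
  induction m with
  | zero => exact ⟨[], by simp, rfl⟩
  | succ m ih =>
    obtain ⟨L, hL, hrun⟩ := ih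
    exact ⟨L2 ++ L, by simp; omega, (adeltaStar_append S L2 L _ _).mpr ⟨c, h2, hrun⟩⟩

lemma LP_closed (S : Sys X U Y) {q q' : Option (Set X)} (hq : q ∈ LP S)
    (L : List (Option U × Y)) (h : AdeltaStar S q L q') : q' ∈ LP S := by
  obtain ⟨c, h1, h2, h3⟩ := hq
  exact ⟨c, h1, h2, h3.trans (rtg_of_run S L q q' h)⟩

lemma run_subset_fold (S : Sys X U Y) :
    ∀ (L : List (Option U × Y)) (q z s : Set X),
    AdeltaStar S (some q) L (some z) → q ⊆ s →
    ∃ l' : List (U × Y), l'.length = L.length ∧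
      z ⊆ l'.foldl (fun t p => obsStep S t p.1 p.2) s := by
  intro L
  induction L with
  | nil =>
    intro q z s h hs
    have hqz : q = z := by injection h
    exact ⟨[], rfl, hqz ▸ hs⟩
  | cons l L' ih =>
    intro q z s h hs
    obtain ⟨c, hstep, hrest⟩ := h
    obtain ⟨o, y⟩ := l
    cases o with
    | none => cases c <;> exact hstep.elim
    | some u =>
      cases c with
      | none => exact hstep.elim
      | some w =>
        obtain ⟨-, -, hsub⟩ := hstep
        obtain ⟨l'', hlen, hz⟩ := ih w z (obsStep S s u y) hrest
          (hsub.trans (obsStep_mono S hs u y))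
        exact ⟨(u, y) :: l'', by simp [hlen], hz⟩

lemma reach_of_run (S : Sys X U Y) (L : List (Option U × Y)) (z : Set X)
    (h : AdeltaStar S none L (some z)) :
    ∃ (y0 : Y) (l' : List (U × Y)), L.length = l'.length + 1 ∧ z ⊆ ReachIO S y0 l' := by
  cases L with
  | nil => exact absurd (show (none : Option (Set X)) = some z from h) (by simp)
  | cons hd L' =>
    obtain ⟨c, hstep, hrest⟩ := h
    obtain ⟨o, y⟩ := hd
    cases o with
    | some u => cases c <;> exact hstep.elim
    | none =>
      cases c with
      | none => exact hstep.elim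
      | some w =>
        obtain ⟨-, -, hsub⟩ := hstep
        obtain ⟨l', hlen, hz⟩ := run_subset_fold S L' w z {x | S.H x = y} hrest hsub
        exact ⟨y, l', by simp [hlen], hz⟩

lemma pair_run (S : Sys X U Y) (y0 : Y) :
    ∀ (l : List (U × Y)) (x1 x2 : X), x1 ∈ ReachIO S y0 l → x2 ∈ ReachIO S y0 l →
    AdeltaStar S none
      ((none, y0) :: l.map (fun p => ((some p.1 : Option U), p.2))) (some {x1, x2}) := by
  intro l
  induction l using List.reverseRecOn with
  | nil =>
    intro x1 x2 h1 h2
    refine ⟨some {x1, x2}, ⟨⟨x1, by simp⟩, ⟨x1, x2, rfl⟩, ?_⟩, rfl⟩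
    intro w hw
    rcases hw with h | h
    · exact h ▸ h1
    · exact h ▸ h2
  | append_singleton l p ihl =>
    intro x1 x2 h1 h2
    rw [ReachIO, List.foldl_append] at h1 h2
    obtain ⟨⟨x1', hx1', htr1⟩, hH1⟩ := h1
    obtain ⟨⟨x2', hx2', htr2⟩, hH2⟩ := h2
    have hrun := ihl x1' x2' hx1' hx2'
    rw [List.map_append,
      show (((none : Option U), y0) :: (l.map (fun p => ((some p.1 : Option U), p.2)) ++
        [p].map (fun p => ((some p.1 : Option U), p.2)))) =
        (((none : Option U), y0) :: l.map (fun p => ((some p.1 : Option U), p.2))) ++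
        [(some p.1, p.2)] from rfl]
    refine (adeltaStar_append S _ _ _ _).mpr ⟨some {x1', x2'}, hrun,
      some {x1, x2}, ⟨⟨x1, by simp⟩, ⟨x1, x2, rfl⟩, ?_⟩, rfl⟩
    intro w hw
    rcases hw with h | h
    · exact h ▸ ⟨⟨x1', by simp, htr1⟩, hH1⟩
    · exact h ▸ ⟨⟨x2', by simp, htr2⟩, hH2⟩

lemma transientOK_card (S : Sys X U Y) [Finite X] :
    transientOK S (Nat.card (Option (Set X))) := by
  classical
  intro y0 l q hlen hrun
  set n := Nat.card (Option (Set X)) with hn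
  obtain ⟨f, hf0, hfend, hfstep⟩ := adeltaStar_trace S _ _ _ hrun
  have hLlen : ((none, y0) :: l.map (fun p => ((some p.1 : Option U), p.2))).length = n + 1 := by
    simp [hlen]
  rw [hLlen] at hfend hfstep
  haveI : Fintype (Set X) := Fintype.ofFinite _
  haveI : Fintype (Option (Set X)) := instFintypeOption
  have hcard : Fintype.card (Option (Set X)) < Fintype.card (Fin (n + 1)) := by
    rw [Fintype.card_fin, ← Nat.card_eq_fintype_card, ← hn]
    omega
  obtain ⟨i, j, hij, heq⟩ :=
    Fintype.exists_ne_map_eq_of_card_lt (fun i : Fin (n + 1) => f (i.val + 1)) hcard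
  -- wlog i < j
  have key : ∀ i j : Fin (n + 1), i.val < j.val → f (i.val + 1) = f (j.val + 1) → q ∈ LP S := by
    intro i j hlt he
    refine ⟨f (i.val + 1), ?_, ?_, ?_⟩
    · rw [← hf0]
      exact rtg_of_trace S f (n + 1) hfstep 0 (i.val + 1) (by omega) (by omega)
    · have := tg_of_trace S f (n + 1) hfstep (i.val + 1) (j.val + 1) (by omega) (by omega)
      rwa [← he] at this
    · rw [← hfend]
      exact rtg_of_trace S f (n + 1) hfstep (i.val + 1) (n + 1) (by omega) (by omega)
  rcases Nat.lt_or_ge i.val j.val with h | h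
  · exact key i j h heq
  · have h' : j.val < i.val := by
      rcases Nat.lt_or_ge j.val i.val with h' | h'
      · exact h'
      · exact absurd (Fin.ext (by omega)) hij
    exact key j i h' heq.symm

lemma transientOK_Tt (S : Sys X U Y) [Finite X] : transientOK S (Tt S) :=
  Nat.sInf_mem (s := {t | transientOK S t}) ⟨_, transientOK_card S⟩

lemma LP_pair (S : Sys X U Y) (hdet : Detectable S) {z : Set X}
    (hz : some z ∈ LP S) : z.Subsingleton := by
  obtain ⟨N, hN⟩ := hdet
  obtain ⟨c, h1, h2, h3⟩ := hz
  obtain ⟨L1, hL1⟩ := run_of_rtg S h1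
  obtain ⟨L2, hL2len, hL2⟩ := run_of_tg S h2
  obtain ⟨L3, hL3⟩ := run_of_rtg S h3
  obtain ⟨Lc, hLc, hLcrun⟩ := pump S hL2 hL2len (N + 1)
  have hrun : AdeltaStar S none (L1 ++ Lc ++ L3) (some z) :=
    (adeltaStar_append S (L1 ++ Lc) L3 _ _).mpr
      ⟨c, (adeltaStar_append S L1 Lc _ _).mpr ⟨c, hL1, hLcrun⟩, hL3⟩
  obtain ⟨y0, l', hlen, hsub⟩ := reach_of_run S _ z hrun
  have hNl : N ≤ l'.length := by
    simp only [List.length_append] at hlen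
    omega
  intro a ha b hb
  exact hN y0 l' hNl (hsub ha) (hsub hb)

end Aux

/-- If `S` is detectable, then any input sequence of length at least the transient
period `T_t`, together with its matching observation sequence, determines the
current state of `S` up to at most one candidate. -/
theorem detectable_after_transient {X U Y : Type} [Finite X] [Finite U] [Finite Y]
    (S : Sys X U Y) (hinit : S.init = Set.univ) (hdet : Detectable S) :
    ∀ (y0 : Y) (l : List (U × Y)), Tt S ≤ l.length →
      (ReachIO S y0 l).Subsingleton := by
  intro y0 l hlen x1 h1 x2 h2
  have hrun := pair_run S y0 l x1 x2 h1 h2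
  rw [← List.take_append_drop (Tt S) l, List.map_append, ← List.cons_append] at hrun
  obtain ⟨c, hc1, hc2⟩ := (adeltaStar_append S _ _ _ _).mp hrun
  have hcLP : c ∈ LP S := transientOK_Tt S y0 (l.take (Tt S)) c
    (by rw [List.length_take]; omega) hc1
  have hzLP : some ({x1, x2} : Set X) ∈ LP S := LP_closed S hcLP _ hc2
  exact LP_pair S hdet hzLP (by simp) (by simp)
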